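/- For all n ≥ 0 and k ≥ 0, the number of 312-avoiding permutations of length n with exactly k peaks equals the number of 321-avoiding permutations of length n with exactly k peaks, i.e., a_{n,k}^{pk}(312) = a_{n,k}^{pk}(321). -/

import Mathlib

open scoped Classical

/-- The word `π₁π₂⋯π_n` of a permutation of `{1,…,n}`, with values in `{1,…,n}`. -/
def permWord {n : ℕ} (π : Equiv.Perm (Fin n)) : List ℕ :=
  List.ofFn fun i => (π i : ℕ) + 1

/-- The word `l` contains the word `ρ` as a (classical) pattern. -/
def ContainsPat (l ρ : List ℕ) : Prop :=
  ∃ f : Fin ρ.length → Fin l.length, StrictMono f ∧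
    ∀ a b : Fin ρ.length, ρ.get a < ρ.get b ↔ l.get (f a) < l.get (f b)

/-- `l` avoids every pattern in the list `B`. -/
def AvoidsAll (l : List ℕ) (B : List (List ℕ)) : Prop :=
  ∀ ρ ∈ B, ¬ ContainsPat l ρ

/-- Number of ascents of the word `l`. -/
def ascents (l : List ℕ) : ℕ :=
  ((Finset.range (l.length - 1)).filter fun i => l.getD i 0 < l.getD (i + 1) 0).card

/-- Number of descents of the word `l`. -/
def descents (l : List ℕ) : ℕ :=
  ((Finset.range (l.length - 1)).filter fun i => l.getD (i + 1) 0 < l.getD i 0).card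

/-- Number of double ascents of the word `l`. -/
def dascents (l : List ℕ) : ℕ :=
  ((Finset.range (l.length - 2)).filter fun i =>
    l.getD i 0 < l.getD (i + 1) 0 ∧ l.getD (i + 1) 0 < l.getD (i + 2) 0).card

/-- Number of double descents of the word `l`. -/
def ddescents (l : List ℕ) : ℕ :=
  ((Finset.range (l.length - 2)).filter fun i =>
    l.getD (i + 1) 0 < l.getD i 0 ∧ l.getD (i + 2) 0 < l.getD (i + 1) 0).card

/-- Number of peaks of the word `l`. -/
def peaks (l : List ℕ) : ℕ :=
  ((Finset.range (l.length - 2)).filter fun i =>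
    l.getD i 0 < l.getD (i + 1) 0 ∧ l.getD (i + 2) 0 < l.getD (i + 1) 0).card

/-- Number of valleys of the word `l`. -/
def valleys (l : List ℕ) : ℕ :=
  ((Finset.range (l.length - 2)).filter fun i =>
    l.getD (i + 1) 0 < l.getD i 0 ∧ l.getD (i + 1) 0 < l.getD (i + 2) 0).card

/-- `acount n k stat B` is the number of permutations of `{1,…,n}` avoiding all
patterns in `B` whose statistic `stat` equals `k`. -/
noncomputable def acount (n k : ℕ) (stat : List ℕ → ℕ) (B : List (List ℕ)) : ℕ :=
  (Finset.univ.filter fun π : Equiv.Perm (Fin n) =>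
    AvoidsAll (permWord π) B ∧ stat (permWord π) = k).card


namespace PkWork

/-- prefix maximum of the first `i` entries, seeded by `m`. -/
def pmax (m : ℕ) (l : List ℕ) (i : ℕ) : ℕ := (l.take i).foldl max m

/-- position `i` is a record (left-to-right maximum). -/
def IsRec (m : ℕ) (l : List ℕ) (i : ℕ) : Prop := pmax m l i < l.getD i 0

/-- values at non-record positions, in order. -/
def rests : ℕ → List ℕ → List ℕ
  | _, [] => []
  | m, h :: t => if m < h then rests h t else h :: rests m t

/-- values at record positions, in order. -/
def lvals : ℕ → List ℕ → List ℕ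
  | _, [] => []
  | m, h :: t => if m < h then h :: lvals h t else lvals m t

/-- prefix maxima at the non-record positions, in order. -/
def bnds : ℕ → List ℕ → List ℕ
  | _, [] => []
  | m, h :: t => if m < h then bnds h t else m :: bnds m t

/-- fill non-record positions with successive elements of `a`. -/
def phiA : ℕ → List ℕ → List ℕ → List ℕ
  | _, _, [] => []
  | m, a, h :: t => if m < h then h :: phiA h a t else a.headI :: phiA m a.tail t

/-- largest element of `a` that is `< m` (0 if none). -/
def pick (m : ℕ) (a : List ℕ) : ℕ := (a.filter (· < m)).foldr max 0

/-- fill non-record positions greedily with the largest available value below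
the current prefix maximum. -/
def psiA : ℕ → List ℕ → List ℕ → List ℕ
  | _, _, [] => []
  | m, a, h :: t =>
    if m < h then h :: psiA h a t
    else pick m a :: psiA m (a.erase (pick m a)) t

/-- sort the non-record values increasingly. -/
def phi (l : List ℕ) : List ℕ := phiA 0 ((rests 0 l).insertionSort (· ≤ ·)) l

/-- greedy inverse of `phi`. -/
def psi (l : List ℕ) : List ℕ := psiA 0 (rests 0 l) l

/-- the increasing-rest property (equivalent to 321-avoidance). -/
def RP (m : ℕ) (l : List ℕ) : Prop :=
  ∀ j k, j < k → k < l.length → ¬ IsRec m l j → ¬ IsRec m l k →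
    l.getD j 0 < l.getD k 0

/-- the greedy property (equivalent to 312-avoidance). -/
def GP (m : ℕ) (l : List ℕ) : Prop :=
  ∀ j k, j < k → k < l.length → ¬ IsRec m l j → ¬ IsRec m l k →
    l.getD j 0 < l.getD k 0 → pmax m l j < l.getD k 0

-- basic pmax lemmas
@[simp] lemma pmax_zero (m : ℕ) (l : List ℕ) : pmax m l 0 = m := rfl

@[simp] lemma pmax_nil (m i : ℕ) : pmax m [] i = m := by
  simp [pmax]

lemma pmax_cons (m h : ℕ) (t : List ℕ) (i : ℕ) :
    pmax m (h :: t) (i + 1) = pmax (max m h) t i := by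
  simp [pmax, List.take_succ_cons]

lemma pmax_succ (m : ℕ) (l : List ℕ) (i : ℕ) :
    pmax m l (i + 1) = max (pmax m l i) (l.getD i 0) := by
  induction l generalizing m i with
  | nil => simp
  | cons h t ih =>
    cases i with
    | zero => simp [pmax_cons, pmax]
    | succ i => simp [pmax_cons, ih, List.getD_cons_succ]

lemma le_pmax_self (m : ℕ) (l : List ℕ) (i : ℕ) : m ≤ pmax m l i := by
  induction i with
  | zero => simp
  | succ i ih => rw [pmax_succ]; exact le_trans ih (le_max_left _ _)

lemma pmax_mono (m : ℕ) (l : List ℕ) {i j : ℕ} (h : i ≤ j) :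
    pmax m l i ≤ pmax m l j := by
  induction j with
  | zero => simp [Nat.le_zero.mp h]
  | succ j ih =>
    rcases Nat.lt_or_ge i (j+1) with hlt | hge
    · exact le_trans (ih (Nat.lt_succ_iff.mp hlt)) (by rw [pmax_succ]; exact le_max_left _ _)
    · have : i = j + 1 := le_antisymm h hge
      simp [this]

lemma getD_le_pmax {m : ℕ} {l : List ℕ} {j i : ℕ} (h : j < i) :
    l.getD j 0 ≤ pmax m l i := by
  have h1 : l.getD j 0 ≤ pmax m l (j + 1) := by
    rw [pmax_succ]; exact le_max_right _ _
  exact le_trans h1 (pmax_mono m l h)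

lemma pmax_eq_m_or_entry (m : ℕ) (l : List ℕ) (i : ℕ) :
    pmax m l i = m ∨ ∃ j < i, pmax m l i = l.getD j 0 := by
  induction i with
  | zero => left; rfl
  | succ i ih =>
    rw [pmax_succ]
    rcases max_cases (pmax m l i) (l.getD i 0) with ⟨he, _⟩ | ⟨he, _⟩
    · rw [he]
      rcases ih with h | ⟨j, hj, hje⟩
      · left; exact h
      · right; exact ⟨j, Nat.lt_succ_of_lt hj, hje⟩
    · right; exact ⟨i, Nat.lt_succ_self i, he⟩

end PkWork

namespace PkWork
open List

-- IsRec basics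
lemma isRec_cons_zero {m h : ℕ} {t : List ℕ} : IsRec m (h :: t) 0 ↔ m < h := by
  simp [IsRec]

lemma isRec_cons_succ {m h : ℕ} {t : List ℕ} {i : ℕ} :
    IsRec m (h :: t) (i + 1) ↔ IsRec (max m h) t i := by
  simp [IsRec, pmax_cons, List.getD_cons_succ]

-- rests / lvals / bnds lengths and partition
lemma rests_length_eq_bnds (m : ℕ) (w : List ℕ) :
    (rests m w).length = (bnds m w).length := by
  induction w generalizing m with
  | nil => rfl
  | cons h t ih =>
    by_cases hm : m < h <;> simp [rests, bnds, hm, ih]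

lemma perm_rests_append_lvals (m : ℕ) (w : List ℕ) :
    w ~ rests m w ++ lvals m w := by
  induction w generalizing m with
  | nil => simp [rests, lvals]
  | cons h t ih =>
    by_cases hm : m < h
    · simp only [rests, lvals, if_pos hm]
      exact ((ih h).cons h).trans (List.perm_middle.symm)
    · simp only [rests, lvals, if_neg hm]
      exact (ih m).cons h

lemma rests_sublist (m : ℕ) (w : List ℕ) : rests m w <+ w := by
  induction w generalizing m with
  | nil => simp [rests]
  | cons h t ih =>
    by_cases hm : m < h
    · simpa [rests, hm] using (ih h).cons h
    · simpa [rests, hm] using (ih m).cons₂ h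

lemma lvals_sublist (m : ℕ) (w : List ℕ) : lvals m w <+ w := by
  induction w generalizing m with
  | nil => simp [lvals]
  | cons h t ih =>
    by_cases hm : m < h
    · simpa [lvals, hm] using (ih h).cons₂ h
    · simpa [lvals, hm] using (ih m).cons h

lemma le_of_mem_bnds {m : ℕ} {w : List ℕ} {b : ℕ} (hb : b ∈ bnds m w) : m ≤ b := by
  induction w generalizing m with
  | nil => simp [bnds] at hb
  | cons h t ih =>
    by_cases hm : m < h
    · simp only [bnds, if_pos hm] at hb
      exact le_trans (le_of_lt hm) (ih hb)
    · simp only [bnds, if_neg hm, List.mem_cons] at hb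
      rcases hb with rfl | hb
      · exact le_refl _
      · exact ih hb

lemma bnds_sorted (m : ℕ) (w : List ℕ) : List.Pairwise (· ≤ ·) (bnds m w) := by
  induction w generalizing m with
  | nil => simp [bnds]
  | cons h t ih =>
    by_cases hm : m < h
    · simpa [bnds, hm] using ih h
    · simp only [bnds, if_neg hm]
      exact List.pairwise_cons.mpr ⟨fun b hb => le_of_mem_bnds hb, ih m⟩

lemma sorted_getD_mono {s : List ℕ} (hs : List.Pairwise (· ≤ ·) s) {i j : ℕ}
    (hij : i ≤ j) (hj : j < s.length) : s.getD i 0 ≤ s.getD j 0 := by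
  have hi : i < s.length := lt_of_le_of_lt hij hj
  rw [List.getD_eq_get _ _ ⟨i, hi⟩, List.getD_eq_get _ _ ⟨j, hj⟩]
  exact List.Pairwise.rel_get_of_le hs (by exact hij)

lemma rests_lt_bnds {m : ℕ} {w : List ℕ} (hw : w.Nodup) (hm : ∀ x ∈ w, x ≠ m) :
    ∀ i < (rests m w).length, (rests m w).getD i 0 < (bnds m w).getD i 0 := by
  induction w generalizing m with
  | nil => simp [rests]
  | cons h t ih =>
    by_cases hlt : m < h
    · intro i hi
      simp only [rests, if_pos hlt] at hi ⊢
      simp only [bnds, if_pos hlt]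
      exact ih (List.nodup_cons.mp hw).2
        (fun x hx hxe => (List.nodup_cons.mp hw).1 (by rw [← hxe]; exact hx)) i hi
    · have hhm : h < m :=
        lt_of_le_of_ne (Nat.not_lt.mp hlt) (hm h (List.mem_cons_self))
      intro i hi
      simp only [rests, if_neg hlt] at hi ⊢
      simp only [bnds, if_neg hlt]
      cases i with
      | zero => simpa using hhm
      | succ i =>
        simp only [List.getD_cons_succ]
        simp only [List.length_cons, Nat.succ_lt_succ_iff] at hi
        exact ih (List.nodup_cons.mp hw).2
          (fun x hx => hm x (List.mem_cons_of_mem h hx)) i hi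

-- index correspondences
lemma mem_rests_of_not_isRec {m : ℕ} {w : List ℕ} {i : ℕ} (hi : i < w.length)
    (h : ¬ IsRec m w i) : w.getD i 0 ∈ rests m w := by
  induction w generalizing m i with
  | nil => simp at hi
  | cons a t ih =>
    cases i with
    | zero =>
      rw [isRec_cons_zero] at h
      simp [rests, if_neg h]
    | succ i =>
      rw [isRec_cons_succ] at h
      simp only [List.length_cons, Nat.succ_lt_succ_iff] at hi
      have := ih hi h
      by_cases hm : m < a
      · simp only [rests, if_pos hm, List.getD_cons_succ]
        simpa [max_eq_right (le_of_lt hm)] using this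
      · simp only [rests, if_neg hm, List.getD_cons_succ]
        refine List.mem_cons_of_mem _ ?_
        simpa [max_eq_left (Nat.not_lt.mp hm)] using this

lemma exists_index_of_mem_rests {m : ℕ} {w : List ℕ} {x : ℕ} (hx : x ∈ rests m w) :
    ∃ i < w.length, ¬ IsRec m w i ∧ w.getD i 0 = x := by
  induction w generalizing m with
  | nil => simp [rests] at hx
  | cons a t ih =>
    by_cases hm : m < a
    · simp only [rests, if_pos hm] at hx
      obtain ⟨i, hi, hrec, hval⟩ := ih hx
      refine ⟨i + 1, by simpa using hi, ?_, by simpa using hval⟩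
      rw [isRec_cons_succ, max_eq_right (le_of_lt hm)]
      exact hrec
    · simp only [rests, if_neg hm, List.mem_cons] at hx
      rcases hx with rfl | hx
      · exact ⟨0, by simp, by rw [isRec_cons_zero]; exact hm, by simp⟩
      · obtain ⟨i, hi, hrec, hval⟩ := ih hx
        refine ⟨i + 1, by simpa using hi, ?_, by simpa using hval⟩
        rw [isRec_cons_succ, max_eq_left (Nat.not_lt.mp hm)]
        exact hrec

lemma mem_lvals_of_isRec {m : ℕ} {w : List ℕ} {i : ℕ} (hi : i < w.length)
    (h : IsRec m w i) : w.getD i 0 ∈ lvals m w := by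
  induction w generalizing m i with
  | nil => simp at hi
  | cons a t ih =>
    cases i with
    | zero =>
      rw [isRec_cons_zero] at h
      simp [lvals, if_pos h]
    | succ i =>
      rw [isRec_cons_succ] at h
      simp only [List.length_cons, Nat.succ_lt_succ_iff] at hi
      have := ih hi h
      by_cases hm : m < a
      · simp only [lvals, if_pos hm, List.getD_cons_succ]
        refine List.mem_cons_of_mem _ ?_
        simpa [max_eq_right (le_of_lt hm)] using this
      · simp only [lvals, if_neg hm, List.getD_cons_succ]
        simpa [max_eq_left (Nat.not_lt.mp hm)] using this

end PkWork

namespace PkWork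
open List

-- pigeonhole: sorted rearrangement stays below a sorted bound list
lemma sorted_perm_lt_bnds {s r b : List ℕ} (hs : List.Pairwise (· ≤ ·) s)
    (hsr : s ~ r) (hb : List.Pairwise (· ≤ ·) b) (hlen : r.length = b.length)
    (hdom : ∀ i < r.length, r.getD i 0 < b.getD i 0) :
    ∀ i < s.length, s.getD i 0 < b.getD i 0 := by
  intro i hi
  have hlen2 : s.length = r.length := hsr.length_eq
  set c := s.getD i 0 with hc
  have key : ∃ j ≤ i, c ≤ r.getD j 0 := by
    by_contra hcon
    push_neg at hcon
    -- count elements < c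
    have h1 : i + 1 ≤ r.countP (fun x => decide (x < c)) := by
      have hlen3 : (r.take (i+1)).length = i+1 := by
        rw [List.length_take]; omega
      have ht' : (r.take (i+1)).countP (fun x => decide (x < c)) =
          (r.take (i+1)).length := by
        apply List.countP_eq_length.mpr
        intro x hx
        simp only [decide_eq_true_eq]
        obtain ⟨j, hj, hxj⟩ := List.mem_take_iff_getElem.mp hx
        have hj' : j ≤ i := by omega
        have := hcon j hj'
        rw [List.getD_eq_getElem _ _ (by omega : j < r.length)] at this
        omega
      have ht : (r.take (i+1)).countP (fun x => decide (x < c)) = i + 1 := by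
        rw [ht', hlen3]
      calc i + 1 = (r.take (i+1)).countP (fun x => decide (x < c)) := ht.symm
        _ ≤ r.countP (fun x => decide (x < c)) := (List.take_sublist _ _).countP_le
    have h2 : s.countP (fun x => decide (x < c)) ≤ i := by
      have hsplit : s.countP (fun x => decide (x < c)) =
          (s.take i).countP (fun x => decide (x < c)) +
          (s.drop i).countP (fun x => decide (x < c)) := by
        rw [← List.countP_append, List.take_append_drop]
      have hd : (s.drop i).countP (fun x => decide (x < c)) = 0 := by
        rw [List.countP_eq_zero]
        intro x hx
        simp only [decide_eq_true_eq, not_lt]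
        obtain ⟨j, hj, hxj⟩ := List.mem_iff_getElem.mp hx
        rw [List.length_drop] at hj
        have : x = s.getD (i + j) 0 := by
          rw [List.getD_eq_getElem _ _ (by omega : i + j < s.length), ← hxj,
            List.getElem_drop]
        rw [this, hc]
        exact sorted_getD_mono hs (Nat.le_add_right _ _) (by omega)
      have hle : (s.take i).countP (fun x => decide (x < c)) ≤ i := by
        calc (s.take i).countP (fun x => decide (x < c)) ≤ (s.take i).length :=
            List.countP_le_length
          _ ≤ i := by rw [List.length_take]; omega
      omega
    rw [hsr.countP_eq] at h2
    omega
  obtain ⟨j, hji, hcj⟩ := key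
  have hj : j < r.length := by omega
  calc c ≤ r.getD j 0 := hcj
    _ < b.getD j 0 := hdom j hj
    _ ≤ b.getD i 0 := sorted_getD_mono hb hji (by omega)

-- erase dichotomy
lemma erase_getD_cases (s : List ℕ) (x : ℕ) :
    ∀ i, (s.erase x).getD i 0 = s.getD i 0 ∨ (s.erase x).getD i 0 = s.getD (i+1) 0 := by
  induction s with
  | nil => intro i; left; simp
  | cons h t ih =>
    intro i
    by_cases hx : h = x
    · rw [List.erase_cons, if_pos (by simpa using hx)]
      right; simp
    · rw [List.erase_cons, if_neg (by simpa using hx)]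
      cases i with
      | zero => left; simp
      | succ i =>
        simp only [List.getD_cons_succ]
        exact ih i

-- foldr max basics
lemma foldr_max_mem (l : List ℕ) : l.foldr max 0 = 0 ∨ l.foldr max 0 ∈ l := by
  induction l with
  | nil => left; rfl
  | cons h t ih =>
    simp only [List.foldr_cons]
    rcases le_or_gt (t.foldr max 0) h with hle | hlt
    · right; rw [max_eq_left hle]; exact List.mem_cons_self
    · rw [max_eq_right (le_of_lt hlt)]
      rcases ih with h0 | hm
      · left; exact h0
      · right; exact List.mem_cons_of_mem _ hm

lemma le_foldr_max {l : List ℕ} {z : ℕ} (hz : z ∈ l) : z ≤ l.foldr max 0 := by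
  induction l with
  | nil => simp at hz
  | cons h t ih =>
    simp only [List.foldr_cons]
    rcases List.mem_cons.mp hz with rfl | hz
    · exact le_max_left _ _
    · exact le_trans (ih hz) (le_max_right _ _)

lemma pick_spec {m : ℕ} {a : List ℕ} {z : ℕ} (hz : z ∈ a) (hzm : z < m) (hz0 : 0 < z) :
    pick m a ∈ a ∧ pick m a < m ∧ (∀ y ∈ a, y < m → y ≤ pick m a) := by
  have hzf : z ∈ a.filter (· < m) := by
    rw [List.mem_filter]; exact ⟨hz, by simpa using hzm⟩
  have hpos : 0 < pick m a := lt_of_lt_of_le hz0 (le_foldr_max hzf)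
  have hmem : pick m a ∈ a.filter (· < m) := by
    rcases foldr_max_mem (a.filter (· < m)) with h0 | hm
    · rw [pick] at hpos; omega
    · exact hm
  rw [List.mem_filter] at hmem
  refine ⟨hmem.1, by simpa using hmem.2, fun y hy hym => ?_⟩
  exact le_foldr_max (List.mem_filter.mpr ⟨hy, by simpa using hym⟩)

end PkWork

namespace PkWork
open List

lemma phiA_main : ∀ (w : List ℕ) (m : ℕ) (a : List ℕ),
    w.Nodup → (∀ x ∈ w, x ≠ m) → (∀ x ∈ w, 0 < x) →
    List.Pairwise (· ≤ ·) a → a.Nodup →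
    a.length = (bnds m w).length →
    (∀ i < a.length, a.getD i 0 < (bnds m w).getD i 0) →
    (phiA m a w).length = w.length ∧
    (∀ i, pmax m (phiA m a w) i = pmax m w i) ∧
    (∀ i < w.length, (IsRec m (phiA m a w) i ↔ IsRec m w i)) ∧
    (∀ i < w.length, IsRec m w i → (phiA m a w).getD i 0 = w.getD i 0) ∧
    rests m (phiA m a w) = a ∧
    lvals m (phiA m a w) = lvals m w ∧
    RP m (phiA m a w) := by
  intro w
  induction w with
  | nil =>
    intro m a _ _ _ _ _ hlen _
    have ha : a = [] := List.length_eq_zero_iff.mp (by simpa [bnds] using hlen)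
    subst ha
    refine ⟨rfl, fun i => rfl, by simp, by simp, by simp [phiA, rests], rfl, ?_⟩
    intro j k _ hk
    simp [phiA] at hk
  | cons h t ih =>
    intro m a hw hwm hw0 ha han hlen hdom
    have hwt : t.Nodup := (List.nodup_cons.mp hw).2
    have hw0t : ∀ x ∈ t, 0 < x := fun x hx => hw0 x (List.mem_cons_of_mem h hx)
    by_cases hm : m < h
    · -- record step
      simp only [phiA, if_pos hm]
      have hwmt : ∀ x ∈ t, x ≠ h := fun x hx he =>
        (List.nodup_cons.mp hw).1 (he ▸ hx)
      have hlen' : a.length = (bnds h t).length := by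
        simpa [bnds, if_pos hm] using hlen
      have hdom' : ∀ i < a.length, a.getD i 0 < (bnds h t).getD i 0 := by
        intro i hi
        simpa [bnds, if_pos hm] using hdom i hi
      obtain ⟨C1, C2, C3, C3', C4, C5, C6⟩ := ih h a hwt hwmt hw0t ha han hlen' hdom'
      have hmaxh : max m h = h := max_eq_right (le_of_lt hm)
      refine ⟨by simpa using C1, ?_, ?_, ?_, ?_, ?_, ?_⟩
      · intro i
        cases i with
        | zero => rfl
        | succ i => rw [pmax_cons, pmax_cons, hmaxh]; exact C2 i
      · intro i hi
        cases i with
        | zero => simp [isRec_cons_zero]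
        | succ i =>
          rw [isRec_cons_succ, isRec_cons_succ, hmaxh]
          exact C3 i (by simpa using hi)
      · intro i hi hrec
        cases i with
        | zero => simp
        | succ i =>
          rw [isRec_cons_succ, hmaxh] at hrec
          simpa using C3' i (by simpa using hi) hrec
      · simp only [rests, if_pos hm]; exact C4
      · simp only [lvals, if_pos hm]; rw [C5]
      · intro j k hjk hk hj' hk'
        cases j with
        | zero =>
          exact absurd (isRec_cons_zero.mpr hm) hj'
        | succ j =>
          cases k with
          | zero => omega
          | succ k =>
            rw [isRec_cons_succ, hmaxh] at hj' hk'
            simp only [List.getD_cons_succ]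
            exact C6 j k (by omega) (by simpa using hk) hj' hk'
    · -- non-record step
      have hhm : h < m := lt_of_le_of_ne (Nat.not_lt.mp hm)
        (hwm h (List.mem_cons_self))
      simp only [phiA, if_neg hm]
      have hbnds : bnds m (h :: t) = m :: bnds m t := by simp [bnds, if_neg hm]
      rw [hbnds] at hlen hdom
      cases a with
      | nil => simp at hlen
      | cons a0 a' =>
      have ha0m : a0 < m := by simpa using hdom 0 (by simp)
      have ha' : List.Pairwise (· ≤ ·) a' := (List.pairwise_cons.mp ha).2
      have ha0le : ∀ y ∈ a', a0 ≤ y := (List.pairwise_cons.mp ha).1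
      have han' : a'.Nodup := (List.nodup_cons.mp han).2
      have ha0nm : a0 ∉ a' := (List.nodup_cons.mp han).1
      have hwmt : ∀ x ∈ t, x ≠ m := fun x hx => hwm x (List.mem_cons_of_mem h hx)
      have hlen' : a'.length = (bnds m t).length := by simpa using hlen
      have hdom' : ∀ i < a'.length, a'.getD i 0 < (bnds m t).getD i 0 := by
        intro i hi
        simpa using hdom (i+1) (by simpa using Nat.succ_lt_succ hi)
      obtain ⟨C1, C2, C3, C3', C4, C5, C6⟩ := ih m a' hwt hwmt hw0t ha' han' hlen' hdom'
      have hmaxa : max m a0 = m := max_eq_left (le_of_lt ha0m)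
      have hmaxh : max m h = m := max_eq_left (le_of_lt hhm)
      simp only [List.headI, List.tail_cons]
      refine ⟨by simpa using C1, ?_, ?_, ?_, ?_, ?_, ?_⟩
      · intro i
        cases i with
        | zero => rfl
        | succ i => rw [pmax_cons, pmax_cons, hmaxa, hmaxh]; exact C2 i
      · intro i hi
        cases i with
        | zero =>
          simp only [isRec_cons_zero]
          constructor
          · intro hlt; omega
          · intro hlt; omega
        | succ i =>
          rw [isRec_cons_succ, isRec_cons_succ, hmaxa, hmaxh]
          exact C3 i (by simpa using hi)
      · intro i hi hrec
        cases i with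
        | zero =>
          rw [isRec_cons_zero] at hrec; omega
        | succ i =>
          rw [isRec_cons_succ, hmaxh] at hrec
          simpa using C3' i (by simpa using hi) hrec
      · simp only [rests, if_neg (by omega : ¬ m < a0)]
        rw [C4]
      · simp only [lvals, if_neg (by omega : ¬ m < a0)]
        rw [C5, if_neg hm]
      · intro j k hjk hk hj' hk'
        cases j with
        | zero =>
          cases k with
          | zero => omega
          | succ k =>
            rw [isRec_cons_succ, hmaxa] at hk'
            simp only [List.getD_cons_zero, List.getD_cons_succ]
            have hkl : k < (phiA m a' t).length := by simpa using hk
            have hmem : (phiA m a' t).getD k 0 ∈ rests m (phiA m a' t) :=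
              mem_rests_of_not_isRec hkl hk'
            rw [C4] at hmem
            exact lt_of_le_of_ne (ha0le _ hmem) (fun he => ha0nm (he ▸ hmem))
        | succ j =>
          cases k with
          | zero => omega
          | succ k =>
            rw [isRec_cons_succ, hmaxa] at hj' hk'
            simp only [List.getD_cons_succ]
            exact C6 j k (by omega) (by simpa using hk) hj' hk'

end PkWork

namespace PkWork
open List

lemma sort_erase_eq (a : List ℕ) (x : ℕ) :
    (a.erase x).insertionSort (· ≤ ·) = (a.insertionSort (· ≤ ·)).erase x := by
  have h1 : (a.erase x).insertionSort (· ≤ ·) ~ (a.insertionSort (· ≤ ·)).erase x :=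
    (List.perm_insertionSort _ _).trans
      ((List.perm_insertionSort (· ≤ ·) a).symm.erase x)
  have h2 : List.Pairwise (· ≤ ·) ((a.erase x).insertionSort (· ≤ ·)) :=
    List.pairwise_insertionSort _ _
  have h3 : List.Pairwise (· ≤ ·) ((a.insertionSort (· ≤ ·)).erase x) :=
    List.Pairwise.sublist List.erase_sublist (List.pairwise_insertionSort _ a)
  exact List.Perm.eq_of_pairwise' h2 h3 h1

lemma psiA_main : ∀ (w : List ℕ) (m : ℕ) (a : List ℕ),
    w.Nodup → (∀ x ∈ w, x ≠ m) → (∀ x ∈ w, 0 < x) →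
    a.Nodup → (∀ x ∈ a, 0 < x) → (∀ x ∈ a, x ≠ m) →
    (∀ x ∈ a, ∀ i < w.length, IsRec m w i → x ≠ w.getD i 0) →
    a.length = (bnds m w).length →
    (∀ i < a.length, (a.insertionSort (· ≤ ·)).getD i 0 < (bnds m w).getD i 0) →
    (psiA m a w).length = w.length ∧
    (∀ i, pmax m (psiA m a w) i = pmax m w i) ∧
    (∀ i < w.length, (IsRec m (psiA m a w) i ↔ IsRec m w i)) ∧
    (∀ i < w.length, IsRec m w i → (psiA m a w).getD i 0 = w.getD i 0) ∧
    rests m (psiA m a w) ~ a ∧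
    lvals m (psiA m a w) = lvals m w ∧
    GP m (psiA m a w) := by
  intro w
  induction w with
  | nil =>
    intro m a _ _ _ _ _ _ _ hlen _
    have ha : a = [] := List.length_eq_zero_iff.mp (by simpa [bnds] using hlen)
    subst ha
    refine ⟨rfl, fun i => rfl, by simp, by simp, by simp [psiA, rests], rfl, ?_⟩
    intro j k _ hk
    simp [psiA] at hk
  | cons h t ih =>
    intro m a hw hwm hw0 han ha0 ham hAL hlen hdom
    have hwt : t.Nodup := (List.nodup_cons.mp hw).2
    have hw0t : ∀ x ∈ t, 0 < x := fun x hx => hw0 x (List.mem_cons_of_mem h hx)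
    by_cases hm : m < h
    · -- record step
      simp only [psiA, if_pos hm]
      have hwmt : ∀ x ∈ t, x ≠ h := fun x hx he =>
        (List.nodup_cons.mp hw).1 (by rw [← he]; exact hx)
      have hmaxh : max m h = h := max_eq_right (le_of_lt hm)
      have hrec0 : IsRec m (h :: t) 0 := isRec_cons_zero.mpr hm
      have hamh : ∀ x ∈ a, x ≠ h := fun x hx =>
        hAL x hx 0 (by simp) hrec0
      have hAL' : ∀ x ∈ a, ∀ i < t.length, IsRec h t i → x ≠ t.getD i 0 := by
        intro x hx i hi hri
        have := hAL x hx (i+1) (by simpa using hi)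
          (by rw [isRec_cons_succ, hmaxh]; exact hri)
        simpa using this
      have hlen' : a.length = (bnds h t).length := by
        simpa [bnds, if_pos hm] using hlen
      have hdom' : ∀ i < a.length,
          (a.insertionSort (· ≤ ·)).getD i 0 < (bnds h t).getD i 0 := by
        intro i hi
        simpa [bnds, if_pos hm] using hdom i hi
      obtain ⟨C1, C2, C3, C3', C4, C5, C6⟩ :=
        ih h a hwt hwmt hw0t han ha0 hamh hAL' hlen' hdom'
      refine ⟨by simpa using C1, ?_, ?_, ?_, ?_, ?_, ?_⟩
      · intro i
        cases i with
        | zero => rfl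
        | succ i => rw [pmax_cons, pmax_cons, hmaxh]; exact C2 i
      · intro i hi
        cases i with
        | zero => simp [isRec_cons_zero]
        | succ i =>
          rw [isRec_cons_succ, isRec_cons_succ, hmaxh]
          exact C3 i (by simpa using hi)
      · intro i hi hrec
        cases i with
        | zero => simp
        | succ i =>
          rw [isRec_cons_succ, hmaxh] at hrec
          simpa using C3' i (by simpa using hi) hrec
      · simp only [rests, if_pos hm]; exact C4
      · simp only [lvals, if_pos hm]; rw [C5]
      · intro j k hjk hk hj' hk'
        cases j with
        | zero => exact absurd (isRec_cons_zero.mpr hm) hj'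
        | succ j =>
          cases k with
          | zero => omega
          | succ k =>
            rw [isRec_cons_succ, hmaxh] at hj' hk'
            intro hlt
            simp only [List.getD_cons_succ] at hlt ⊢
            rw [pmax_cons, hmaxh]
            exact C6 j k (by omega) (by simpa using hk) hj' hk' hlt
    · -- non-record step
      have hhm : h < m := lt_of_le_of_ne (Nat.not_lt.mp hm)
        (hwm h (List.mem_cons_self))
      simp only [psiA, if_neg hm]
      have hbnds : bnds m (h :: t) = m :: bnds m t := by simp [bnds, if_neg hm]
      rw [hbnds] at hlen hdom
      have halen : 0 < a.length := by simp at hlen; omega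
      -- find a small element
      set s := a.insertionSort (· ≤ ·) with hs
      have hsa : s ~ a := List.perm_insertionSort _ _
      have hslen : 0 < s.length := by rwa [hsa.length_eq]
      have hz : s.getD 0 0 ∈ a := hsa.mem_iff.mp
        (by rw [List.getD_eq_getElem _ _ hslen]; exact List.getElem_mem _)
      have hzm : s.getD 0 0 < m := by simpa using hdom 0 halen
      obtain ⟨hxa, hxm, hxmax⟩ := pick_spec hz hzm (ha0 _ hz)
      set x := pick m a with hxdef
      -- hypotheses for tail
      have han' : (a.erase x).Nodup := han.erase x
      have ha0' : ∀ y ∈ a.erase x, 0 < y := fun y hy => ha0 y (List.mem_of_mem_erase hy)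
      have ham' : ∀ y ∈ a.erase x, y ≠ m := fun y hy => ham y (List.mem_of_mem_erase hy)
      have hAL' : ∀ y ∈ a.erase x, ∀ i < t.length, IsRec m t i → y ≠ t.getD i 0 := by
        intro y hy i hi hri
        have := hAL y (List.mem_of_mem_erase hy) (i+1) (by simpa using hi)
          (by rw [isRec_cons_succ, max_eq_left (le_of_lt hhm)]; exact hri)
        simpa using this
      have hlen' : (a.erase x).length = (bnds m t).length := by
        rw [List.length_erase_of_mem hxa]
        simp at hlen; omega
      have hdom' : ∀ i < (a.erase x).length,
          ((a.erase x).insertionSort (· ≤ ·)).getD i 0 < (bnds m t).getD i 0 := by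
        intro i hi
        rw [sort_erase_eq, ← hs]
        have hilen : i < (bnds m t).length := by rwa [hlen'] at hi
        rcases erase_getD_cases s x i with hcase | hcase
        · rw [hcase]
          have hi2 : i < a.length := by
            have := List.length_erase_of_mem hxa; omega
          have h1 : s.getD i 0 < (m :: bnds m t).getD i 0 := hdom i hi2
          cases i with
          | zero =>
            simp only [List.getD_cons_zero] at h1
            have hmem : (bnds m t).getD 0 0 ∈ bnds m t := by
              rw [List.getD_eq_getElem _ _ hilen]; exact List.getElem_mem _
            exact lt_of_lt_of_le h1 (le_of_mem_bnds hmem)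
          | succ i =>
            simp only [List.getD_cons_succ] at h1
            exact lt_of_lt_of_le h1
              (sorted_getD_mono (bnds_sorted m t) (Nat.le_succ i) hilen)
        · rw [hcase]
          have hlen2 : (a.erase x).length = a.length - 1 := List.length_erase_of_mem hxa
          have hi2 : i + 1 < a.length := by omega
          have h1 := hdom (i+1) hi2
          simpa using h1
      obtain ⟨C1, C2, C3, C3', C4, C5, C6⟩ :=
        ih m (a.erase x) hwt (fun y hy => hwm y (List.mem_cons_of_mem h hy)) hw0t
          han' ha0' ham' hAL' hlen' hdom'
      have hmaxx : max m x = m := max_eq_left (le_of_lt hxm)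
      have hmaxh : max m h = m := max_eq_left (le_of_lt hhm)
      refine ⟨by simpa using C1, ?_, ?_, ?_, ?_, ?_, ?_⟩
      · intro i
        cases i with
        | zero => rfl
        | succ i => rw [pmax_cons, pmax_cons, hmaxx, hmaxh]; exact C2 i
      · intro i hi
        cases i with
        | zero => simp only [isRec_cons_zero]; omega
        | succ i =>
          rw [isRec_cons_succ, isRec_cons_succ, hmaxx, hmaxh]
          exact C3 i (by simpa using hi)
      · intro i hi hrec
        cases i with
        | zero => rw [isRec_cons_zero] at hrec; omega
        | succ i =>
          rw [isRec_cons_succ, hmaxh] at hrec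
          simpa using C3' i (by simpa using hi) hrec
      · simp only [rests, if_neg (by omega : ¬ m < x)]
        exact (C4.cons x).trans (List.perm_cons_erase hxa).symm
      · simp only [lvals, if_neg (by omega : ¬ m < x), if_neg hm]
        exact C5
      · intro j k hjk hk hj' hk'
        cases j with
        | zero =>
          cases k with
          | zero => omega
          | succ k =>
            rw [isRec_cons_succ, hmaxx] at hk'
            intro hlt
            simp only [List.getD_cons_zero, List.getD_cons_succ] at hlt ⊢
            rw [pmax_zero]
            -- the later rest value must exceed m
            have hkl : k < (psiA m (a.erase x) t).length := by simpa using hk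
            have hmem : (psiA m (a.erase x) t).getD k 0 ∈ rests m (psiA m (a.erase x) t) :=
              mem_rests_of_not_isRec hkl hk'
            have hmem' : (psiA m (a.erase x) t).getD k 0 ∈ a :=
              List.mem_of_mem_erase (C4.mem_iff.mp hmem)
            set v := (psiA m (a.erase x) t).getD k 0
            rcases lt_or_ge v m with hvm | hvm
            · exact absurd (hxmax v hmem' hvm) (by omega)
            · exact lt_of_le_of_ne hvm (fun he => ham v hmem' he.symm)
        | succ j =>
          cases k with
          | zero => omega
          | succ k =>
            rw [isRec_cons_succ, hmaxx] at hj' hk'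
            intro hlt
            simp only [List.getD_cons_succ] at hlt ⊢
            rw [pmax_cons, hmaxx]
            exact C6 j k (by omega) (by simpa using hk) hj' hk' hlt

end PkWork

namespace PkWork
open List

lemma RP_tail {m h : ℕ} {t : List ℕ} (hrp : RP m (h :: t)) : RP (max m h) t := by
  intro j k hjk hk hj' hk'
  have := hrp (j+1) (k+1) (by omega) (by simpa using hk)
    (by rw [isRec_cons_succ]; exact hj') (by rw [isRec_cons_succ]; exact hk')
  simpa using this

lemma GP_tail {m h : ℕ} {t : List ℕ} (hgp : GP m (h :: t)) : GP (max m h) t := by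
  intro j k hjk hk hj' hk' hlt
  have := hgp (j+1) (k+1) (by omega) (by simpa using hk)
    (by rw [isRec_cons_succ]; exact hj') (by rw [isRec_cons_succ]; exact hk')
    (by simpa using hlt)
  rw [pmax_cons] at this
  simpa using this

lemma phiA_rests_self {w : List ℕ} : ∀ {m : ℕ}, RP m w → phiA m (rests m w) w = w := by
  induction w with
  | nil => intro m _; rfl
  | cons h t ih =>
    intro m hrp
    by_cases hm : m < h
    · have h1 : max m h = h := max_eq_right (le_of_lt hm)
      simp only [phiA, rests, if_pos hm]
      rw [ih (by simpa [h1] using RP_tail hrp)]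
    · have h1 : max m h = m := max_eq_left (Nat.not_lt.mp hm)
      simp only [phiA, rests, if_neg hm, List.headI, List.tail_cons]
      rw [ih (by simpa [h1] using RP_tail hrp)]

lemma psiA_rests_self {w : List ℕ} : ∀ {m : ℕ}, w.Nodup → (∀ x ∈ w, x ≠ m) →
    (∀ x ∈ w, 0 < x) → GP m w → psiA m (rests m w) w = w := by
  induction w with
  | nil => intro m _ _ _ _; rfl
  | cons h t ih =>
    intro m hw hwm hw0 hgp
    have hwt : t.Nodup := (List.nodup_cons.mp hw).2
    have hw0t : ∀ x ∈ t, 0 < x := fun x hx => hw0 x (List.mem_cons_of_mem h hx)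
    by_cases hm : m < h
    · have h1 : max m h = h := max_eq_right (le_of_lt hm)
      simp only [psiA, rests, if_pos hm]
      rw [ih hwt (fun x hx he => (List.nodup_cons.mp hw).1 (by rw [← he]; exact hx))
        hw0t (by simpa [h1] using GP_tail hgp)]
    · have hhm : h < m := lt_of_le_of_ne (Nat.not_lt.mp hm)
        (hwm h (List.mem_cons_self))
      have h1 : max m h = m := max_eq_left (Nat.not_lt.mp hm)
      simp only [psiA, rests, if_neg hm]
      have hhmem : h ∈ h :: rests m t := List.mem_cons_self
      obtain ⟨hxa, hxm, hxmax⟩ := pick_spec hhmem hhm (hw0 h (List.mem_cons_self))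
      set x := pick m (h :: rests m t) with hxdef
      have hxh : x = h := by
        by_contra hne
        have hxr : x ∈ rests m t := by
          rcases List.mem_cons.mp hxa with he | hmem
          · exact absurd he hne
          · exact hmem
        obtain ⟨k, hk, hkrec, hkval⟩ := exists_index_of_mem_rests hxr
        have hhx : h < x := by
          rcases lt_or_ge h x with hlt | hge
          · exact hlt
          · exact absurd (le_antisymm (hxmax h hhmem hhm) hge).symm hne
        have := hgp 0 (k+1) (by omega) (by simpa using hk)
          (by rw [isRec_cons_zero]; exact hm)
          (by rw [isRec_cons_succ, h1]; exact hkrec)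
          (by simp only [List.getD_cons_zero, List.getD_cons_succ, hkval]; exact hhx)
        rw [pmax_zero] at this
        simp only [List.getD_cons_succ, hkval] at this
        omega
      rw [hxh, List.erase_cons_head]
      rw [ih hwt (fun x hx => hwm x (List.mem_cons_of_mem h hx)) hw0t
        (by simpa [h1] using GP_tail hgp)]

-- psiA only depends on the multiset of available values
lemma psiA_perm {a₁ a₂ : List ℕ} (hp : a₁ ~ a₂) :
    ∀ (w : List ℕ) (m : ℕ), psiA m a₁ w = psiA m a₂ w := by
  have : LeftCommutative (max : ℕ → ℕ → ℕ) := ⟨fun a b c => max_left_comm a b c⟩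
  intro w
  induction w generalizing a₁ a₂ hp with
  | nil => intro m; rfl
  | cons h t ih =>
    intro m
    by_cases hm : m < h
    · simp only [psiA, if_pos hm]
      rw [ih hp]
    · simp only [psiA, if_neg hm]
      have hpick : pick m a₁ = pick m a₂ := by
        unfold pick
        exact (hp.filter _).foldr_eq 0
      rw [hpick, ih (hp.erase _)]

-- composing: phiA ∘ psiA = phiA (same branch structure)
lemma phiA_psiA : ∀ (w : List ℕ) (m : ℕ) (a a' : List ℕ),
    w.Nodup → (∀ x ∈ w, x ≠ m) → (∀ x ∈ w, 0 < x) →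
    (∀ x ∈ a', 0 < x) →
    a'.length = (bnds m w).length →
    (∀ i < a'.length, (a'.insertionSort (· ≤ ·)).getD i 0 < (bnds m w).getD i 0) →
    phiA m a (psiA m a' w) = phiA m a w := by
  intro w
  induction w with
  | nil => intro m a a' _ _ _ _ _ _; rfl
  | cons h t ih =>
    intro m a a' hw hwm hw0 ha0 hlen hdom
    have hwt : t.Nodup := (List.nodup_cons.mp hw).2
    have hw0t : ∀ x ∈ t, 0 < x := fun x hx => hw0 x (List.mem_cons_of_mem h hx)
    by_cases hm : m < h
    · simp only [psiA, phiA, if_pos hm]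
      rw [ih h a a' hwt (fun x hx he => (List.nodup_cons.mp hw).1 (by rw [← he]; exact hx))
        hw0t ha0 (by simpa [bnds, if_pos hm] using hlen)
        (by intro i hi; simpa [bnds, if_pos hm] using hdom i hi)]
    · have hhm : h < m := lt_of_le_of_ne (Nat.not_lt.mp hm)
        (hwm h (List.mem_cons_self))
      have hbnds : bnds m (h :: t) = m :: bnds m t := by simp [bnds, if_neg hm]
      rw [hbnds] at hlen hdom
      have halen : 0 < a'.length := by simp at hlen; omega
      set s := a'.insertionSort (· ≤ ·) with hs
      have hsa : s ~ a' := List.perm_insertionSort _ _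
      have hslen : 0 < s.length := by rwa [hsa.length_eq]
      have hz : s.getD 0 0 ∈ a' := hsa.mem_iff.mp
        (by rw [List.getD_eq_getElem _ _ hslen]; exact List.getElem_mem _)
      have hzm : s.getD 0 0 < m := by simpa using hdom 0 halen
      obtain ⟨hxa, hxm, hxmax⟩ := pick_spec hz hzm (ha0 _ hz)
      set x := pick m a' with hxdef
      simp only [psiA, if_neg hm]
      rw [← hxdef]
      simp only [phiA, if_neg (by omega : ¬ m < x), if_neg hm]
      congr 1
      apply ih m a.tail (a'.erase x) hwt
        (fun y hy => hwm y (List.mem_cons_of_mem h hy)) hw0t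
        (fun y hy => ha0 y (List.mem_of_mem_erase hy))
      · rw [List.length_erase_of_mem hxa]
        simp at hlen; omega
      · intro i hi
        rw [sort_erase_eq, ← hs]
        have hlen2 : (a'.erase x).length = a'.length - 1 := List.length_erase_of_mem hxa
        have hilen : i < (bnds m t).length := by
          rw [List.length_erase_of_mem hxa] at hi
          simp at hlen; omega
        rcases erase_getD_cases s x i with hcase | hcase
        · rw [hcase]
          have h1 : s.getD i 0 < (m :: bnds m t).getD i 0 := hdom i (by omega)
          cases i with
          | zero =>
            simp only [List.getD_cons_zero] at h1
            have hmem : (bnds m t).getD 0 0 ∈ bnds m t := by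
              rw [List.getD_eq_getElem _ _ hilen]; exact List.getElem_mem _
            exact lt_of_lt_of_le h1 (le_of_mem_bnds hmem)
          | succ i =>
            simp only [List.getD_cons_succ] at h1
            exact lt_of_lt_of_le h1
              (sorted_getD_mono (bnds_sorted m t) (Nat.le_succ i) hilen)
        · rw [hcase]
          have h1 := hdom (i+1) (by omega)
          simpa using h1

-- composing: psiA ∘ phiA = psiA
lemma psiA_phiA : ∀ (w : List ℕ) (m : ℕ) (a a' : List ℕ),
    a'.length = (bnds m w).length →
    (∀ i < a'.length, a'.getD i 0 < (bnds m w).getD i 0) →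
    psiA m a (phiA m a' w) = psiA m a w := by
  intro w
  induction w with
  | nil => intro m a a' _ _; rfl
  | cons h t ih =>
    intro m a a' hlen hdom
    by_cases hm : m < h
    · simp only [phiA, psiA, if_pos hm]
      rw [ih h a a' (by simpa [bnds, if_pos hm] using hlen)
        (by intro i hi; simpa [bnds, if_pos hm] using hdom i hi)]
    · have hbnds : bnds m (h :: t) = m :: bnds m t := by simp [bnds, if_neg hm]
      rw [hbnds] at hlen hdom
      cases a' with
      | nil => simp at hlen
      | cons a0 at' =>
        have ha0m : a0 < m := by simpa using hdom 0 (by simp)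
        simp only [phiA, if_neg hm, List.headI, List.tail_cons, psiA,
          if_neg (by omega : ¬ m < a0)]
        congr 1
        apply ih m _ at' (by simpa using hlen)
        intro i hi
        simpa using hdom (i+1) (by simpa using Nat.succ_lt_succ hi)

end PkWork

namespace PkWork
open List

lemma getD_mem {l : List ℕ} {i : ℕ} (hi : i < l.length) : l.getD i 0 ∈ l := by
  rw [List.getD_eq_getElem _ _ hi]; exact List.getElem_mem _

lemma nodup_getD_ne {l : List ℕ} (hw : l.Nodup) {i j : ℕ} (hi : i < l.length)
    (hj : j < l.length) (hij : i ≠ j) : l.getD i 0 ≠ l.getD j 0 := by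
  rw [List.getD_eq_getElem _ _ hi, List.getD_eq_getElem _ _ hj]
  intro he
  exact hij ((List.Nodup.getElem_inj_iff hw (hi := hi) (hj := hj)).mp he)

lemma containsPat312_iff (l : List ℕ) :
    ContainsPat l [3,1,2] ↔ ∃ i j k, i < j ∧ j < k ∧ k < l.length ∧
      l.getD j 0 < l.getD k 0 ∧ l.getD k 0 < l.getD i 0 := by
  constructor
  · rintro ⟨f, hmono, hiff⟩
    set e0 : Fin ([3,1,2] : List ℕ).length := ⟨0, by norm_num⟩ with he0
    set e1 : Fin ([3,1,2] : List ℕ).length := ⟨1, by norm_num⟩ with he1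
    set e2 : Fin ([3,1,2] : List ℕ).length := ⟨2, by norm_num⟩ with he2
    refine ⟨(f e0).val, (f e1).val, (f e2).val, ?_, ?_, (f e2).isLt, ?_, ?_⟩
    · exact hmono (show e0 < e1 by rw [he0, he1]; exact Fin.mk_lt_mk.mpr (by norm_num))
    · exact hmono (show e1 < e2 by rw [he1, he2]; exact Fin.mk_lt_mk.mpr (by norm_num))
    · have := (hiff e1 e2).mp (by rw [he1, he2]; norm_num)
      rwa [List.getD_eq_getElem _ _ (f e1).isLt, List.getD_eq_getElem _ _ (f e2).isLt,
        ← List.get_eq_getElem, ← List.get_eq_getElem]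
    · have := (hiff e2 e0).mp (by rw [he0, he2]; norm_num)
      rwa [List.getD_eq_getElem _ _ (f e2).isLt, List.getD_eq_getElem _ _ (f e0).isLt,
        ← List.get_eq_getElem, ← List.get_eq_getElem]
  · rintro ⟨i, j, k, hij, hjk, hk, h1, h2⟩
    have hi : i < l.length := by omega
    have hj : j < l.length := by omega
    rw [List.getD_eq_getElem _ _ hj, List.getD_eq_getElem _ _ hk] at h1
    rw [List.getD_eq_getElem _ _ hk, List.getD_eq_getElem _ _ hi] at h2
    refine ⟨fun a => if a.val = 0 then ⟨i, hi⟩ else if a.val = 1 then ⟨j, hj⟩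
      else ⟨k, hk⟩, ?_, ?_⟩
    · intro a b hab
      fin_cases a <;> fin_cases b <;> revert hab <;>
        simp [Fin.lt_def] <;> omega
    · intro a b
      fin_cases a <;> fin_cases b <;>
        simp [List.get_eq_getElem] <;> omega
lemma containsPat321_iff (l : List ℕ) :
    ContainsPat l [3,2,1] ↔ ∃ i j k, i < j ∧ j < k ∧ k < l.length ∧
      l.getD k 0 < l.getD j 0 ∧ l.getD j 0 < l.getD i 0 := by
  constructor
  · rintro ⟨f, hmono, hiff⟩
    set e0 : Fin ([3,2,1] : List ℕ).length := ⟨0, by norm_num⟩ with he0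
    set e1 : Fin ([3,2,1] : List ℕ).length := ⟨1, by norm_num⟩ with he1
    set e2 : Fin ([3,2,1] : List ℕ).length := ⟨2, by norm_num⟩ with he2
    refine ⟨(f e0).val, (f e1).val, (f e2).val, ?_, ?_, (f e2).isLt, ?_, ?_⟩
    · exact hmono (show e0 < e1 by rw [he0, he1]; exact Fin.mk_lt_mk.mpr (by norm_num))
    · exact hmono (show e1 < e2 by rw [he1, he2]; exact Fin.mk_lt_mk.mpr (by norm_num))
    · have := (hiff e2 e1).mp (by rw [he1, he2]; norm_num)
      rwa [List.getD_eq_getElem _ _ (f e2).isLt, List.getD_eq_getElem _ _ (f e1).isLt,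
        ← List.get_eq_getElem, ← List.get_eq_getElem]
    · have := (hiff e1 e0).mp (by rw [he0, he1]; norm_num)
      rwa [List.getD_eq_getElem _ _ (f e1).isLt, List.getD_eq_getElem _ _ (f e0).isLt,
        ← List.get_eq_getElem, ← List.get_eq_getElem]
  · rintro ⟨i, j, k, hij, hjk, hk, h1, h2⟩
    have hi : i < l.length := by omega
    have hj : j < l.length := by omega
    rw [List.getD_eq_getElem _ _ hk, List.getD_eq_getElem _ _ hj] at h1
    rw [List.getD_eq_getElem _ _ hj, List.getD_eq_getElem _ _ hi] at h2
    refine ⟨fun a => if a.val = 0 then ⟨i, hi⟩ else if a.val = 1 then ⟨j, hj⟩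
      else ⟨k, hk⟩, ?_, ?_⟩
    · intro a b hab
      fin_cases a <;> fin_cases b <;> revert hab <;>
        simp [Fin.lt_def] <;> omega
    · intro a b
      fin_cases a <;> fin_cases b <;>
        simp [List.get_eq_getElem] <;> omega

lemma gp_iff_avoid {l : List ℕ} (hw : l.Nodup) (h0 : ∀ x ∈ l, 0 < x) :
    (¬ ContainsPat l [3,1,2]) ↔ GP 0 l := by
  rw [containsPat312_iff]
  constructor
  · intro hav j k hjk hk hj' hk' hlt
    by_contra hcon
    push_neg at hcon
    rcases pmax_eq_m_or_entry 0 l j with h0' | ⟨a, haj, hae⟩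
    · have : 0 < l.getD k 0 := h0 _ (getD_mem hk)
      omega
    · have hne : l.getD k 0 ≠ l.getD a 0 :=
        nodup_getD_ne hw hk (by omega) (by omega)
      rw [hae] at hcon
      have hka : l.getD k 0 < l.getD a 0 := by omega
      exact hav ⟨a, j, k, haj, hjk, hk, hlt, hka⟩
  · rintro hgp ⟨i, j, k, hij, hjk, hk, h1, h2⟩
    have hipm : l.getD i 0 ≤ pmax 0 l j := getD_le_pmax hij
    have hj' : ¬ IsRec 0 l j := by
      rw [IsRec]; omega
    have hk' : ¬ IsRec 0 l k := by
      rw [IsRec]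
      have := le_trans hipm (pmax_mono 0 l (le_of_lt hjk))
      omega
    have := hgp j k hjk hk hj' hk' h1
    omega

lemma rp_iff_avoid {l : List ℕ} (hw : l.Nodup) (h0 : ∀ x ∈ l, 0 < x) :
    (¬ ContainsPat l [3,2,1]) ↔ RP 0 l := by
  rw [containsPat321_iff]
  constructor
  · intro hav j k hjk hk hj' hk'
    by_contra hcon
    push_neg at hcon
    have hkj : l.getD k 0 < l.getD j 0 :=
      lt_of_le_of_ne hcon (nodup_getD_ne hw hk (by omega) (by omega))
    rw [IsRec, not_lt] at hj'
    rcases pmax_eq_m_or_entry 0 l j with h0' | ⟨a, haj, hae⟩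
    · have : 0 < l.getD j 0 := h0 _ (getD_mem (by omega))
      omega
    · have hne : l.getD j 0 ≠ l.getD a 0 :=
        nodup_getD_ne hw (by omega) (by omega) (by omega)
      rw [hae] at hj'
      have hja : l.getD j 0 < l.getD a 0 := by omega
      exact hav ⟨a, j, k, haj, hjk, hk, hkj, hja⟩
  · rintro hrp ⟨i, j, k, hij, hjk, hk, h1, h2⟩
    have hipm : l.getD i 0 ≤ pmax 0 l j := getD_le_pmax hij
    have hj' : ¬ IsRec 0 l j := by rw [IsRec]; omega
    have hk' : ¬ IsRec 0 l k := by
      rw [IsRec]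
      have := le_trans hipm (pmax_mono 0 l (le_of_lt hjk))
      omega
    have := hrp j k hjk hk hj' hk'
    omega

lemma rests_sorted_of_RP {w : List ℕ} : ∀ {m : ℕ}, RP m w →
    List.Pairwise (· ≤ ·) (rests m w) := by
  induction w with
  | nil => intro m _; simp [rests]
  | cons h t ih =>
    intro m hrp
    by_cases hm : m < h
    · simp only [rests, if_pos hm]
      exact ih (by simpa [max_eq_right (le_of_lt hm)] using RP_tail hrp)
    · simp only [rests, if_neg hm]
      have hmx : max m h = m := max_eq_left (Nat.not_lt.mp hm)
      refine List.pairwise_cons.mpr ⟨?_, ih (by simpa [hmx] using RP_tail hrp)⟩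
      intro z hz
      obtain ⟨k, hk, hkrec, hkval⟩ := exists_index_of_mem_rests hz
      have := hrp 0 (k+1) (by omega) (by simpa using hk)
        (by rw [isRec_cons_zero]; exact hm)
        (by rw [isRec_cons_succ, hmx]; exact hkrec)
      simp only [List.getD_cons_zero, List.getD_cons_succ, hkval] at this
      omega

end PkWork

namespace PkWork
open List

lemma peak_iff {l : List ℕ} (hw : l.Nodup) (hgr : GP 0 l ∨ RP 0 l)
    {i : ℕ} (hi : i + 2 < l.length) :
    ((l.getD i 0 < l.getD (i+1) 0 ∧ l.getD (i+2) 0 < l.getD (i+1) 0) ↔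
      (IsRec 0 l (i+1) ∧ ¬ IsRec 0 l (i+2))) := by
  have hp1 : pmax 0 l (i+1) = max (pmax 0 l i) (l.getD i 0) := pmax_succ 0 l i
  have hp2 : pmax 0 l (i+2) = max (pmax 0 l (i+1)) (l.getD (i+1) 0) := pmax_succ 0 l (i+1)
  by_cases hr1 : IsRec 0 l (i+1)
  · have hasc : l.getD i 0 < l.getD (i+1) 0 :=
      lt_of_le_of_lt (getD_le_pmax (Nat.lt_succ_self i)) hr1
    by_cases hr2 : IsRec 0 l (i+2)
    · have : l.getD (i+1) 0 < l.getD (i+2) 0 :=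
        lt_of_le_of_lt (getD_le_pmax (Nat.lt_succ_self (i+1))) hr2
      constructor
      · intro hpk; omega
      · intro hpk; exact absurd hr2 hpk.2
    · have hle : l.getD (i+2) 0 ≤ l.getD (i+1) 0 := by
        rw [IsRec, not_lt] at hr2
        rw [hp2] at hr2
        rw [IsRec] at hr1
        omega
      have hne : l.getD (i+2) 0 ≠ l.getD (i+1) 0 :=
        nodup_getD_ne hw (by omega) (by omega) (by omega)
      constructor
      · intro _; exact ⟨hr1, hr2⟩
      · intro _; exact ⟨hasc, by omega⟩
  · -- i+1 not a record: no peak at i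
    rw [IsRec, not_lt] at hr1
    constructor
    swap
    · intro hpk; exact absurd hpk.1 (by rw [IsRec, not_lt]; exact hr1)
    intro hpk
    exfalso
    by_cases hri : IsRec 0 l i
    · rw [IsRec] at hri
      rw [hp1, max_eq_right (le_of_lt hri)] at hr1
      omega
    · rw [IsRec, not_lt] at hri
      rw [hp1, max_eq_left hri] at hr1
      rcases hgr with hgp | hrp
      · have := hgp i (i+1) (Nat.lt_succ_self i) (by omega)
          (by rw [IsRec, not_lt]; exact hri)
          (by rw [IsRec, not_lt, hp1, max_eq_left hri]; exact hr1) hpk.1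
        omega
      · -- RP case: compare i+1 and i+2
        by_cases hr2 : IsRec 0 l (i+2)
        · rw [IsRec] at hr2
          have : l.getD (i+1) 0 ≤ pmax 0 l (i+2) :=
            getD_le_pmax (Nat.lt_succ_self (i+1))
          omega
        · have := hrp (i+1) (i+2) (Nat.lt_succ_self (i+1)) hi
            (by rw [IsRec, not_lt, hp1, max_eq_left hri]; exact hr1) hr2
          omega

lemma peaks_eq_card {l : List ℕ} (hw : l.Nodup) (hgr : GP 0 l ∨ RP 0 l) :
    peaks l = ((Finset.range (l.length - 2)).filter
      (fun i => IsRec 0 l (i+1) ∧ ¬ IsRec 0 l (i+2))).card := by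
  unfold peaks
  congr 1
  apply Finset.filter_congr
  intro i hi
  rw [Finset.mem_range] at hi
  have hi2 : i + 2 < l.length := by omega
  exact peak_iff hw hgr hi2

end PkWork

namespace PkWork
open List

section TopLevel

variable {w : List ℕ}

lemma phi_props (hw : w.Nodup) (h0 : ∀ x ∈ w, 0 < x) :
    (phi w).length = w.length ∧
    (∀ i < w.length, (IsRec 0 (phi w) i ↔ IsRec 0 w i)) ∧
    rests 0 (phi w) = (rests 0 w).insertionSort (· ≤ ·) ∧
    lvals 0 (phi w) = lvals 0 w ∧
    RP 0 (phi w) := by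
  have hwm : ∀ x ∈ w, x ≠ 0 := fun x hx h => by have := h0 x hx; omega
  have hrn : (rests 0 w).Nodup := (rests_sublist 0 w).nodup hw
  have hsn : ((rests 0 w).insertionSort (· ≤ ·)).Nodup :=
    (List.perm_insertionSort _ _).nodup_iff.mpr hrn
  have hlen : ((rests 0 w).insertionSort (· ≤ ·)).length = (bnds 0 w).length := by
    rw [List.length_insertionSort]; exact rests_length_eq_bnds 0 w
  have hdom : ∀ i < ((rests 0 w).insertionSort (· ≤ ·)).length,
      ((rests 0 w).insertionSort (· ≤ ·)).getD i 0 < (bnds 0 w).getD i 0 :=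
    sorted_perm_lt_bnds (List.pairwise_insertionSort _ _) (List.perm_insertionSort _ _)
      (bnds_sorted 0 w) (rests_length_eq_bnds 0 w) (rests_lt_bnds hw hwm)
  obtain ⟨C1, _, C3, _, C4, C5, C6⟩ := phiA_main w 0 _ hw hwm h0
    (List.pairwise_insertionSort _ _) hsn hlen hdom
  exact ⟨C1, C3, C4, C5, C6⟩

lemma psi_props (hw : w.Nodup) (h0 : ∀ x ∈ w, 0 < x) :
    (psi w).length = w.length ∧
    (∀ i < w.length, (IsRec 0 (psi w) i ↔ IsRec 0 w i)) ∧
    rests 0 (psi w) ~ rests 0 w ∧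
    lvals 0 (psi w) = lvals 0 w ∧
    GP 0 (psi w) := by
  have hwm : ∀ x ∈ w, x ≠ 0 := fun x hx h => by have := h0 x hx; omega
  have hrn : (rests 0 w).Nodup := (rests_sublist 0 w).nodup hw
  have hr0 : ∀ x ∈ rests 0 w, 0 < x := fun x hx =>
    h0 x ((rests_sublist 0 w).mem hx)
  have hrm : ∀ x ∈ rests 0 w, x ≠ 0 := fun x hx h => by have := hr0 x hx; omega
  have hdisj : List.Disjoint (rests 0 w) (lvals 0 w) := by
    have := (perm_rests_append_lvals 0 w).nodup_iff.mp hw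
    exact fun x hx hy => (List.nodup_append.mp this).2.2 x hx x hy rfl
  have hAL : ∀ x ∈ rests 0 w, ∀ i < w.length, IsRec 0 w i → x ≠ w.getD i 0 := by
    intro x hx i hi hrec he
    exact hdisj hx (he ▸ mem_lvals_of_isRec hi hrec)
  have hlen : (rests 0 w).length = (bnds 0 w).length := rests_length_eq_bnds 0 w
  have hdom : ∀ i < (rests 0 w).length,
      ((rests 0 w).insertionSort (· ≤ ·)).getD i 0 < (bnds 0 w).getD i 0 := by
    intro i hi
    exact sorted_perm_lt_bnds (List.pairwise_insertionSort _ _)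
      (List.perm_insertionSort _ _) (bnds_sorted 0 w) (rests_length_eq_bnds 0 w)
      (rests_lt_bnds hw hwm) i (by rwa [List.length_insertionSort])
  obtain ⟨C1, _, C3, _, C4, C5, C6⟩ := psiA_main w 0 _ hw hwm h0 hrn hr0 hrm hAL hlen hdom
  exact ⟨C1, C3, C4, C5, C6⟩

lemma phi_perm (hw : w.Nodup) (h0 : ∀ x ∈ w, 0 < x) : phi w ~ w := by
  obtain ⟨_, _, C4, C5, _⟩ := phi_props hw h0
  calc phi w ~ rests 0 (phi w) ++ lvals 0 (phi w) := perm_rests_append_lvals 0 (phi w)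
    _ = (rests 0 w).insertionSort (· ≤ ·) ++ lvals 0 w := by rw [C4, C5]
    _ ~ rests 0 w ++ lvals 0 w := (List.perm_insertionSort _ _).append_right _
    _ ~ w := (perm_rests_append_lvals 0 w).symm

lemma psi_perm_self (hw : w.Nodup) (h0 : ∀ x ∈ w, 0 < x) : psi w ~ w := by
  obtain ⟨_, _, C4, C5, _⟩ := psi_props hw h0
  calc psi w ~ rests 0 (psi w) ++ lvals 0 (psi w) := perm_rests_append_lvals 0 (psi w)
    _ ~ rests 0 w ++ lvals 0 w := by rw [C5]; exact C4.append_right _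
    _ ~ w := (perm_rests_append_lvals 0 w).symm

lemma psi_phi (hw : w.Nodup) (h0 : ∀ x ∈ w, 0 < x) (hgp : GP 0 w) :
    psi (phi w) = w := by
  have hwm : ∀ x ∈ w, x ≠ 0 := fun x hx h => by have := h0 x hx; omega
  obtain ⟨_, _, C4, _, _⟩ := phi_props hw h0
  unfold psi
  rw [C4]
  rw [psiA_perm (List.perm_insertionSort (· ≤ ·) (rests 0 w)) (phi w) 0]
  unfold phi
  rw [psiA_phiA w 0 (rests 0 w) _
    (by rw [List.length_insertionSort]; exact rests_length_eq_bnds 0 w)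
    (sorted_perm_lt_bnds (List.pairwise_insertionSort _ _) (List.perm_insertionSort _ _)
      (bnds_sorted 0 w) (rests_length_eq_bnds 0 w) (rests_lt_bnds hw hwm))]
  exact psiA_rests_self hw hwm h0 hgp

lemma phi_psi (hw : w.Nodup) (h0 : ∀ x ∈ w, 0 < x) (hrp : RP 0 w) :
    phi (psi w) = w := by
  have hwm : ∀ x ∈ w, x ≠ 0 := fun x hx h => by have := h0 x hx; omega
  obtain ⟨_, _, C4, _, _⟩ := psi_props hw h0
  unfold phi
  have hsorteq : (rests 0 (psi w)).insertionSort (· ≤ ·) =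
      (rests 0 w).insertionSort (· ≤ ·) := by
    have hp : (rests 0 (psi w)).insertionSort (· ≤ ·) ~
        (rests 0 w).insertionSort (· ≤ ·) :=
      (List.perm_insertionSort _ _).trans
        (C4.trans (List.perm_insertionSort _ _).symm)
    exact List.Perm.eq_of_pairwise' (hl := hp) (List.pairwise_insertionSort _ _)
      (List.pairwise_insertionSort _ _)
  rw [hsorteq]
  unfold psi
  rw [phiA_psiA w 0 _ (rests 0 w) hw hwm h0
    (fun x hx => h0 x ((rests_sublist 0 w).mem hx))
    (rests_length_eq_bnds 0 w)
    (by intro i hi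
        exact sorted_perm_lt_bnds (List.pairwise_insertionSort _ _)
          (List.perm_insertionSort _ _) (bnds_sorted 0 w) (rests_length_eq_bnds 0 w)
          (rests_lt_bnds hw hwm) i (by rwa [List.length_insertionSort]))]
  rw [List.Pairwise.insertionSort_eq (rests_sorted_of_RP hrp)]
  exact phiA_rests_self hrp

lemma peaks_phi (hw : w.Nodup) (h0 : ∀ x ∈ w, 0 < x) (hgp : GP 0 w) :
    peaks (phi w) = peaks w := by
  obtain ⟨C1, C3, _, _, C6⟩ := phi_props hw h0
  have hpn : (phi w).Nodup := (phi_perm hw h0).nodup_iff.mpr hw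
  rw [peaks_eq_card hpn (Or.inr C6), peaks_eq_card hw (Or.inl hgp), C1]
  congr 1
  apply Finset.filter_congr
  intro i hi
  rw [Finset.mem_range] at hi
  have h1 := C3 (i+1) (by omega)
  have h2 := C3 (i+2) (by omega)
  rw [h1, h2]

lemma peaks_psi (hw : w.Nodup) (h0 : ∀ x ∈ w, 0 < x) (hrp : RP 0 w) :
    peaks (psi w) = peaks w := by
  obtain ⟨C1, C3, _, _, C6⟩ := psi_props hw h0
  have hpn : (psi w).Nodup := (psi_perm_self hw h0).nodup_iff.mpr hw
  rw [peaks_eq_card hpn (Or.inl C6), peaks_eq_card hw (Or.inr hrp), C1]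
  congr 1
  apply Finset.filter_congr
  intro i hi
  rw [Finset.mem_range] at hi
  have h1 := C3 (i+1) (by omega)
  have h2 := C3 (i+2) (by omega)
  rw [h1, h2]

end TopLevel
end PkWork

namespace PkWork
open List

lemma permWord_length {n : ℕ} (π : Equiv.Perm (Fin n)) : (permWord π).length = n := by
  simp [permWord]

lemma permWord_nodup {n : ℕ} (π : Equiv.Perm (Fin n)) : (permWord π).Nodup := by
  rw [permWord, List.nodup_ofFn]
  intro i j hij
  have : π i = π j := by
    have := Nat.add_right_cancel hij
    exact Fin.ext this
  exact π.injective this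

lemma permWord_pos {n : ℕ} (π : Equiv.Perm (Fin n)) : ∀ x ∈ permWord π, 0 < x := by
  intro x hx
  rw [permWord, List.mem_ofFn] at hx
  obtain ⟨i, rfl⟩ := hx
  exact Nat.succ_pos _

lemma permWord_le {n : ℕ} (π : Equiv.Perm (Fin n)) : ∀ x ∈ permWord π, x ≤ n := by
  intro x hx
  rw [permWord, List.mem_ofFn] at hx
  obtain ⟨i, rfl⟩ := hx
  show (π i : ℕ) + 1 ≤ n
  have := (π i).isLt
  omega

lemma permWord_injective {n : ℕ} {π₁ π₂ : Equiv.Perm (Fin n)}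
    (h : permWord π₁ = permWord π₂) : π₁ = π₂ := by
  apply Equiv.ext
  intro i
  have := congrArg (fun l => l.getD i.val 0) h
  simp only [permWord] at this
  rw [List.getD_eq_getElem _ _ (by simpa using i.isLt),
    List.getD_eq_getElem _ _ (by simpa using i.isLt)] at this
  simp only [List.getElem_ofFn, Fin.eta] at this
  exact Fin.ext (by omega)

lemma exists_perm_of_perm_permWord {n : ℕ} {π : Equiv.Perm (Fin n)} {l : List ℕ}
    (h : l ~ permWord π) : ∃ σ : Equiv.Perm (Fin n), permWord σ = l := by
  have hlen : l.length = n := h.length_eq.trans (permWord_length π)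
  have hpos : ∀ x ∈ l, 0 < x := fun x hx => permWord_pos π x (h.mem_iff.mp hx)
  have hle : ∀ x ∈ l, x ≤ n := fun x hx => permWord_le π x (h.mem_iff.mp hx)
  have hnd : l.Nodup := h.nodup_iff.mpr (permWord_nodup π)
  have hget : ∀ i : Fin n, l.getD i.val 0 - 1 < n := by
    intro i
    have hi : i.val < l.length := by omega
    have h1 := hpos _ (getD_mem hi)
    have h2 := hle _ (getD_mem hi)
    omega
  set f : Fin n → Fin n := fun i => ⟨l.getD i.val 0 - 1, hget i⟩ with hf
  have hinj : Function.Injective f := by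
    intro i j hij
    rw [hf] at hij
    simp only [Fin.mk.injEq] at hij
    have hi : i.val < l.length := by omega
    have hj : j.val < l.length := by omega
    have h1 := hpos _ (getD_mem hi)
    have h2 := hpos _ (getD_mem hj)
    have : l.getD i.val 0 = l.getD j.val 0 := by omega
    by_contra hne
    exact nodup_getD_ne hnd hi hj (fun he => hne (Fin.ext he)) this
  refine ⟨Equiv.ofBijective f (Finite.injective_iff_bijective.mp hinj), ?_⟩
  apply List.ext_getElem (by simp [permWord, hlen])
  intro i h1 h2
  simp only [permWord, List.getElem_ofFn]
  have hil : i < l.length := h2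
  have hin : i < n := by omega
  have : (Equiv.ofBijective f (Finite.injective_iff_bijective.mp hinj)) ⟨i, hin⟩ =
      f ⟨i, hin⟩ := rfl
  rw [this, hf]
  simp only
  have h3 := hpos _ (getD_mem hil)
  rw [List.getD_eq_getElem _ _ hil] at h3 ⊢
  omega

end PkWork

theorem stmt1 (n k : ℕ) :
    acount n k peaks [[3,1,2]] = acount n k peaks [[3,2,1]] := by
  classical
  unfold acount
  have havL : ∀ l : List ℕ, AvoidsAll l [[3,1,2]] ↔ ¬ ContainsPat l [3,1,2] := by
    intro l
    constructor
    · intro h; exact h _ (List.mem_singleton_self _)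
    · intro h ρ hρ
      rw [List.mem_singleton] at hρ
      subst hρ; exact h
  have havR : ∀ l : List ℕ, AvoidsAll l [[3,2,1]] ↔ ¬ ContainsPat l [3,2,1] := by
    intro l
    constructor
    · intro h; exact h _ (List.mem_singleton_self _)
    · intro h ρ hρ
      rw [List.mem_singleton] at hρ
      subst hρ; exact h
  have hex : ∀ π : Equiv.Perm (Fin n), ∃ σ : Equiv.Perm (Fin n),
      permWord σ = PkWork.phi (permWord π) :=
    fun π => PkWork.exists_perm_of_perm_permWord
      (PkWork.phi_perm (PkWork.permWord_nodup π) (PkWork.permWord_pos π))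
  choose F hF using hex
  have hex' : ∀ π : Equiv.Perm (Fin n), ∃ σ : Equiv.Perm (Fin n),
      permWord σ = PkWork.psi (permWord π) :=
    fun π => PkWork.exists_perm_of_perm_permWord
      (PkWork.psi_perm_self (PkWork.permWord_nodup π) (PkWork.permWord_pos π))
  choose G hG using hex'
  apply Finset.card_bij (fun π _ => F π)
  · -- maps into the target filter
    intro π hπ
    rw [Finset.mem_filter] at hπ ⊢
    obtain ⟨_, hav, hpk⟩ := hπ
    have hw := PkWork.permWord_nodup π
    have h0 := PkWork.permWord_pos π
    have hgp : PkWork.GP 0 (permWord π) :=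
      (PkWork.gp_iff_avoid hw h0).mp ((havL _).mp hav)
    obtain ⟨_, _, _, _, C6⟩ := PkWork.phi_props hw h0
    have hphin : (PkWork.phi (permWord π)).Nodup :=
      (PkWork.phi_perm hw h0).nodup_iff.mpr hw
    have hphi0 : ∀ x ∈ PkWork.phi (permWord π), 0 < x :=
      fun x hx => h0 x ((PkWork.phi_perm hw h0).mem_iff.mp hx)
    refine ⟨Finset.mem_univ _, ?_, ?_⟩
    · rw [havR, hF]
      exact (PkWork.rp_iff_avoid hphin hphi0).mpr C6
    · rw [hF]
      rw [PkWork.peaks_phi hw h0 hgp]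
      exact hpk
  · -- injective
    intro π₁ h₁ π₂ h₂ he
    rw [Finset.mem_filter] at h₁ h₂
    have hgp₁ : PkWork.GP 0 (permWord π₁) :=
      (PkWork.gp_iff_avoid (PkWork.permWord_nodup π₁) (PkWork.permWord_pos π₁)).mp
        ((havL _).mp h₁.2.1)
    have hgp₂ : PkWork.GP 0 (permWord π₂) :=
      (PkWork.gp_iff_avoid (PkWork.permWord_nodup π₂) (PkWork.permWord_pos π₂)).mp
        ((havL _).mp h₂.2.1)
    have hphi : PkWork.phi (permWord π₁) = PkWork.phi (permWord π₂) := by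
      rw [← hF, ← hF, he]
    have : permWord π₁ = permWord π₂ := by
      rw [← PkWork.psi_phi (PkWork.permWord_nodup π₁) (PkWork.permWord_pos π₁) hgp₁,
        ← PkWork.psi_phi (PkWork.permWord_nodup π₂) (PkWork.permWord_pos π₂) hgp₂,
        hphi]
    exact PkWork.permWord_injective this
  · -- surjective
    intro ρ hρ
    rw [Finset.mem_filter] at hρ
    obtain ⟨_, hav, hpk⟩ := hρ
    have hv := PkWork.permWord_nodup ρ
    have h0v := PkWork.permWord_pos ρ
    have hrp : PkWork.RP 0 (permWord ρ) :=
      (PkWork.rp_iff_avoid hv h0v).mp ((havR _).mp hav)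
    have hpsin : (PkWork.psi (permWord ρ)).Nodup :=
      (PkWork.psi_perm_self hv h0v).nodup_iff.mpr hv
    have hpsi0 : ∀ x ∈ PkWork.psi (permWord ρ), 0 < x :=
      fun x hx => h0v x ((PkWork.psi_perm_self hv h0v).mem_iff.mp hx)
    obtain ⟨_, _, _, _, C6⟩ := PkWork.psi_props hv h0v
    refine ⟨G ρ, ?_, ?_⟩
    · rw [Finset.mem_filter]
      refine ⟨Finset.mem_univ _, ?_, ?_⟩
      · rw [havL, hG]
        exact (PkWork.gp_iff_avoid hpsin hpsi0).mpr C6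
      · rw [hG, PkWork.peaks_psi hv h0v hrp]
        exact hpk
    · apply PkWork.permWord_injective
      rw [hF, hG]
      exact PkWork.phi_psi hv h0v hrp
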